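/- arXiv:2207.06056 — 4 statements merged into one kernel-verified Lean document; each statement's English description precedes it below -/
import Mathlib

section
/- Let M ≥ 2 be an integer, 1 ≤ l ≤ M-1, a > 0 and Θ = (θ_1,…,θ_{M-1}) ∈ ℝ^{M-1}. Then det ℬ_l(a,Θ) = sinh^{M-2}(πA) · ( (e^{πA} - (-1)^M e^{-πA})/2 + Σ_{k=0}^{l-1} (-1)^{l+k} e^{A(θ_k - θ_l + π)} + (-1)^M Σ_{k=l}^{M-1} (-1)^{l+k} e^{A(θ_k - θ_l - π)} ), where θ_0 := 0. -/
open Complex Real Finset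

noncomputable section

/-- `A(a) = -2ai/(a+i)`. -/
def Afun (a : ℝ) : ℂ := -2 * (a : ℂ) * Complex.I / ((a : ℂ) + Complex.I)

/-- The angles `θ_0 = 0`, `θ_j = Θ_j` for `1 ≤ j ≤ M-1`, read off a vector `Θ ∈ ℝ^{M-1}`. -/
def thN (M : ℕ) (Θ : Fin (M - 1) → ℝ) (j : ℕ) : ℝ :=
  if h : 1 ≤ j ∧ j ≤ M - 1 then Θ ⟨j - 1, by omega⟩ else 0

/-- `r = e^{-Aπ}`. -/
def rC (a : ℝ) : ℂ := Complex.exp (-(Afun a * (π : ℂ)))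

/-- `r_k = e^{-Aθ_{k-1}}`, for `1 ≤ k ≤ M`. -/
def rkC (M : ℕ) (a : ℝ) (Θ : Fin (M - 1) → ℝ) (k : ℕ) : ℂ :=
  Complex.exp (-(Afun a * ((thN M Θ (k - 1) : ℝ) : ℂ)))

/-- `c = (r + r⁻¹)/2`. -/
def cC (a : ℝ) : ℂ := (rC a + (rC a)⁻¹) / 2

/-- The matrix `ℬ(a,Θ)`, indexed by `l, m ∈ {1, …, M-1}`. -/
def Bmat (M : ℕ) (a : ℝ) (Θ : Fin (M - 1) → ℝ) : Matrix (Fin (M - 1)) (Fin (M - 1)) ℂ :=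
  Matrix.of fun l m : Fin (M - 1) =>
    if (l : ℕ) = (m : ℕ) then
      (cC a * rkC M a Θ ((l : ℕ) + 2) - rC a * rkC M a Θ 1) / rkC M a Θ ((l : ℕ) + 2)
    else if (l : ℕ) < (m : ℕ) then
      rC a * (rkC M a Θ ((l : ℕ) + 2) - rkC M a Θ 1) / rkC M a Θ ((m : ℕ) + 2)
    else
      ((rC a)⁻¹ * rkC M a Θ ((l : ℕ) + 2) - rC a * rkC M a Θ 1) / rkC M a Θ ((m : ℕ) + 2)

/-- The vector `b`, with entries `b_j = (r⁻¹ r_{j+1} - c r_1)/r_1` for `j ∈ {1, …, M-1}`. -/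
def bvec (M : ℕ) (a : ℝ) (Θ : Fin (M - 1) → ℝ) (j : Fin (M - 1)) : ℂ :=
  ((rC a)⁻¹ * rkC M a Θ ((j : ℕ) + 2) - cC a * rkC M a Θ 1) / rkC M a Θ 1

/-- The matrix `ℬ_l(a,Θ)`: the matrix `ℬ(a,Θ)` with its `l`-th column replaced by `-b`. -/
def BlMat (M : ℕ) (a : ℝ) (Θ : Fin (M - 1) → ℝ) (l : ℕ) :
    Matrix (Fin (M - 1)) (Fin (M - 1)) ℂ :=
  Matrix.of fun i j : Fin (M - 1) =>
    if (j : ℕ) + 1 = l then -bvec M a Θ i else Bmat M a Θ i j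

noncomputable section DetAux

/-- alternating sum -/
lemma altSum_eq (i : ℕ) : (∑ j ∈ Finset.range i, (-1 : ℂ) ^ j) = if Even i then 0 else 1 := by
  induction i with
  | zero => simp
  | succ i ih =>
    rw [Finset.sum_range_succ, ih]
    rcases Nat.even_or_odd i with h | h
    · simp [h, Even.neg_one_pow, Nat.even_add_one]
    · simp [h, Odd.neg_one_pow, Nat.even_add_one, Nat.not_even_iff_odd.mpr h]

def Sseq (y : ℕ → ℂ) : ℕ → ℂ
  | 0 => 0
  | i + 1 => y i - Sseq y i

def wseq (y : ℕ → ℂ) (i : ℕ) : ℂ := y i - 2 * Sseq y i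

lemma sum_wseq (y : ℕ → ℂ) : ∀ i, (∑ j ∈ Finset.range i, wseq y j) = Sseq y i := by
  intro i
  induction i with
  | zero => simp [Sseq]
  | succ i ih =>
    rw [Finset.sum_range_succ, ih]
    show Sseq y i + (y i - 2 * Sseq y i) = Sseq y (i + 1)
    rw [show Sseq y (i+1) = y i - Sseq y i from rfl]; ring

lemma Sseq_eq (y : ℕ → ℂ) : ∀ i, Sseq y i = (-1 : ℂ) ^ (i + 1) * ∑ j ∈ Finset.range i, (-1 : ℂ) ^ j * y j := by
  intro i
  induction i with
  | zero => simp [Sseq]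
  | succ i ih =>
    rw [show Sseq y (i+1) = y i - Sseq y i from rfl, ih, Finset.sum_range_succ]
    have hz : (-1 : ℂ) ^ i * (-1 : ℂ) ^ i = 1 := by
      rw [← pow_add]; exact Even.neg_one_pow ⟨i, rfl⟩
    rw [pow_succ, pow_succ]
    ring_nf
    linear_combination (- y i) * hz

end DetAux

noncomputable section DetAux2

/-- Sum against the lower-triangular 1/2 pattern. -/
lemma ksum (n : ℕ) (i : Fin n) (f : ℕ → ℂ) :
    (∑ j : Fin n, (if (j : ℕ) < (i : ℕ) then 2 else if (i : ℕ) = (j : ℕ) then 1 else 0) * f (j : ℕ))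
      = f (i : ℕ) + 2 * ∑ j ∈ Finset.range (i : ℕ), f j := by
  have h1 : (∑ j : Fin n, (if (j : ℕ) < (i : ℕ) then 2 else if (i : ℕ) = (j : ℕ) then 1 else 0) * f (j : ℕ))
      = ∑ j ∈ Finset.range n, (if j < (i : ℕ) then 2 else if (i : ℕ) = j then 1 else 0) * f j := by
    rw [Finset.sum_range fun j => (if j < (i : ℕ) then 2 else if (i : ℕ) = j then (1:ℂ) else 0) * f j]
  rw [h1]
  have h2 : ∀ j ∈ Finset.range n,
      (if j < (i : ℕ) then (2:ℂ) else if (i : ℕ) = j then 1 else 0) * f j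
        = (if j < (i : ℕ) then 2 * f j else 0) + (if (i : ℕ) = j then f j else 0) := by
    intro j _
    rcases lt_trichotomy j (i : ℕ) with h | h | h
    · simp only [if_pos h, if_neg (by omega : ¬ (i:ℕ) = j)]; ring
    · simp only [if_neg (by omega : ¬ j < (i:ℕ)), if_pos h.symm]; ring
    · simp only [if_neg (by omega : ¬ j < (i:ℕ)), if_neg (by omega : ¬ (i:ℕ) = j)]; ring
  rw [Finset.sum_congr rfl h2, Finset.sum_add_distrib]
  have h3 : (∑ j ∈ Finset.range n, if j < (i : ℕ) then 2 * f j else 0)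
      = ∑ j ∈ Finset.range (i : ℕ), 2 * f j := by
    rw [← Finset.sum_filter]
    apply Finset.sum_congr _ (fun _ _ => rfl)
    ext j; simp only [Finset.mem_filter, Finset.mem_range]
    constructor
    · rintro ⟨_, h⟩; exact h
    · intro h; exact ⟨lt_trans h i.isLt, h⟩
  rw [h3, Finset.sum_ite_eq (Finset.range n) (i:ℕ) f, if_pos (Finset.mem_range.mpr i.isLt),
    Finset.mul_sum]
  ring

lemma abstract_det (n : ℕ) (σ : ℂ) (s u g : Fin n → ℂ) (lam : Fin n) (wu wg : ℕ → ℂ)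
    (hwu : ∀ i : Fin n, σ * s i * (wu (i : ℕ) + 2 * ∑ j ∈ Finset.range (i : ℕ), wu j) = u i)
    (hwg : ∀ i : Fin n, σ * s i * (wg (i : ℕ) + 2 * ∑ j ∈ Finset.range (i : ℕ), wg j) = g i) :
    (Matrix.of fun i j : Fin n =>
        σ * s i * (if (j : ℕ) < (i : ℕ) then 2 else if (i : ℕ) = (j : ℕ) then 1 else 0)
          + (if j = lam then u i else 0) + g i).det
      = (∏ i : Fin n, (σ * s i)) *
          ((1 + wu (lam : ℕ)) * (1 + ∑ j ∈ Finset.range n, wg j)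
            - wg (lam : ℕ) * ∑ j ∈ Finset.range n, wu j) := by
  classical
  set Mm : Matrix (Fin n) (Fin n) ℂ := Matrix.of fun i j =>
    σ * s i * (if (j : ℕ) < (i : ℕ) then 2 else if (i : ℕ) = (j : ℕ) then 1 else 0) with hMm
  set W : Matrix (Fin n) (Fin 2) ℂ := Matrix.of fun i c => if c = 0 then wu (i : ℕ) else wg (i : ℕ) with hW
  set Vt : Matrix (Fin 2) (Fin n) ℂ := Matrix.of fun c j =>
    if c = 0 then (if j = lam then 1 else 0) else 1 with hVt
  have hMW : Mm * W = Matrix.of fun (i : Fin n) (c : Fin 2) => if c = 0 then u i else g i := by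
    ext i c
    simp only [Matrix.mul_apply, hMm, hW, Matrix.of_apply]
    rcases Fin.exists_fin_two.mp ⟨c, rfl⟩ with h | h
    all_goals {
      subst h
      simp only [if_true, if_false, Fin.one_eq_zero_iff, OfNat.ofNat_ne_one, ite_true, ite_false]
      first
      | (rw [show (∑ j : Fin n, σ * s i * (if (j:ℕ) < (i:ℕ) then 2 else if (i:ℕ) = (j:ℕ) then 1 else 0) * wu (j:ℕ)) = σ * s i * ∑ j : Fin n, (if (j:ℕ) < (i:ℕ) then 2 else if (i:ℕ) = (j:ℕ) then 1 else 0) * wu (j:ℕ) from by rw [Finset.mul_sum]; exact Finset.sum_congr rfl fun j _ => by ring, ksum n i wu, hwu i])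
      | (rw [show (∑ j : Fin n, σ * s i * (if (j:ℕ) < (i:ℕ) then 2 else if (i:ℕ) = (j:ℕ) then 1 else 0) * wg (j:ℕ)) = σ * s i * ∑ j : Fin n, (if (j:ℕ) < (i:ℕ) then 2 else if (i:ℕ) = (j:ℕ) then 1 else 0) * wg (j:ℕ) from by rw [Finset.mul_sum]; exact Finset.sum_congr rfl fun j _ => by ring, ksum n i wg, hwg i])
    }
  have hC : (Matrix.of fun i j : Fin n =>
      σ * s i * (if (j : ℕ) < (i : ℕ) then 2 else if (i : ℕ) = (j : ℕ) then 1 else 0)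
        + (if j = lam then u i else 0) + g i) = Mm * (1 + W * Vt) := by
    rw [Matrix.mul_add, Matrix.mul_one, ← Matrix.mul_assoc, hMW]
    ext i j
    simp only [Matrix.add_apply, Matrix.mul_apply, Matrix.of_apply, hMm, hVt]
    rw [Fin.sum_univ_two]
    simp only [Matrix.of_apply, if_true, if_false, ite_true, ite_false,
      Fin.one_eq_zero_iff, OfNat.ofNat_ne_one, mul_ite, mul_one, mul_zero]
    ring_nf
  rw [hC, Matrix.det_mul, Matrix.det_one_add_mul_comm]
  have hdetM : Mm.det = ∏ i : Fin n, (σ * s i) := by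
    rw [Matrix.det_of_lowerTriangular Mm (by
      intro i j hij
      have : (i : ℕ) < (j : ℕ) := hij
      simp only [hMm, Matrix.of_apply, if_neg (by omega : ¬ (j:ℕ) < (i:ℕ)),
        if_neg (by omega : ¬ (i:ℕ) = (j:ℕ)), mul_zero])]
    exact Finset.prod_congr rfl fun i _ => by
      simp [hMm, Matrix.of_apply]
  rw [hdetM]
  congr 1
  rw [Matrix.det_fin_two]
  have hVW : ∀ c' : Fin 2, (Vt * W) 0 c' = W lam c' := by
    intro c'
    simp only [Matrix.mul_apply, hVt, Matrix.of_apply, if_true, ite_true]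
    rw [show (∑ j : Fin n, (if j = lam then (1:ℂ) else 0) * W j c')
        = ∑ j : Fin n, (if j = lam then W j c' else 0) from
      Finset.sum_congr rfl fun j _ => by rcases eq_or_ne j lam with h | h <;> simp [h]]
    rw [Finset.sum_ite_eq' Finset.univ lam (fun j => W j c'), if_pos (Finset.mem_univ lam)]
  have hVW1 : ∀ c' : Fin 2, (Vt * W) 1 c' = ∑ j : Fin n, W j c' := by
    intro c'
    simp only [Matrix.mul_apply, hVt, Matrix.of_apply, Fin.one_eq_zero_iff,
      OfNat.ofNat_ne_one, if_false, ite_false, one_mul]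
  have e00 : ((1 + Vt * W : Matrix (Fin 2) (Fin 2) ℂ)) 0 0 = 1 + wu (lam : ℕ) := by
    simp only [Matrix.add_apply, Matrix.one_apply_eq, hVW]; simp [hW]
  have e11 : ((1 + Vt * W : Matrix (Fin 2) (Fin 2) ℂ)) 1 1 = 1 + ∑ j ∈ Finset.range n, wg j := by
    simp only [Matrix.add_apply, Matrix.one_apply_eq, hVW1]
    congr 1
    rw [← Fin.sum_univ_eq_sum_range]
    exact Finset.sum_congr rfl fun j _ => by simp [hW]
  have e01 : ((1 + Vt * W : Matrix (Fin 2) (Fin 2) ℂ)) 0 1 = wg (lam : ℕ) := by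
    simp only [Matrix.add_apply, Matrix.one_apply_ne (by decide : (0 : Fin 2) ≠ 1), hVW]
    simp [hW]
  have e10 : ((1 + Vt * W : Matrix (Fin 2) (Fin 2) ℂ)) 1 0 = ∑ j ∈ Finset.range n, wu j := by
    simp only [Matrix.add_apply, Matrix.one_apply_ne (by decide : (1 : Fin 2) ≠ 0), hVW1]
    rw [← Fin.sum_univ_eq_sum_range]
    rw [zero_add]
    exact Finset.sum_congr rfl fun j _ => by simp [hW]
  rw [e00, e11, e01, e10]

end DetAux2

set_option maxHeartbeats 1600000 in
theorem det_BlMat (M : ℕ) (hM : 2 ≤ M) (l : ℕ) (hl1 : 1 ≤ l) (hl2 : l ≤ M - 1)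
    (a : ℝ) (ha : 0 < a) (Θ : Fin (M - 1) → ℝ) :
    (BlMat M a Θ l).det =
      Complex.sinh ((π : ℂ) * Afun a) ^ (M - 2) *
        ((Complex.exp ((π : ℂ) * Afun a) - (-1 : ℂ) ^ M * Complex.exp (-((π : ℂ) * Afun a))) / 2 +
          (∑ k ∈ Finset.range l,
            (-1 : ℂ) ^ (l + k) * Complex.exp (Afun a * ((thN M Θ k - thN M Θ l + π : ℝ) : ℂ))) +
          (-1 : ℂ) ^ M * ∑ k ∈ Finset.Icc l (M - 1),
            (-1 : ℂ) ^ (l + k) * Complex.exp (Afun a * ((thN M Θ k - thN M Θ l - π : ℝ) : ℂ))) := by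
  obtain ⟨m, rfl⟩ : ∃ m, M = m + 2 := ⟨M - 2, by omega⟩
  obtain ⟨lm, rfl⟩ : ∃ lm, l = lm + 1 := ⟨l - 1, by omega⟩
  have hlm : lm < m + 1 := by omega
  have haI : ((a : ℂ) + Complex.I) ≠ 0 := fun h => by simpa using congrArg Complex.im h
  set r := rC a with hrdef
  have hr0 : r ≠ 0 := Complex.exp_ne_zero _
  set σ := Complex.sinh ((π : ℂ) * Afun a) with hσdef
  have hexpπ : Complex.exp ((π : ℂ) * Afun a) = r⁻¹ := by
    rw [hrdef, rC, ← Complex.exp_neg]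
    congr 1
    ring
  have hexpπ' : Complex.exp (-((π : ℂ) * Afun a)) = r := by
    rw [hrdef, rC]; congr 1; ring
  have hσr : σ = (r⁻¹ - r) / 2 := by
    rw [hσdef, Complex.sinh, hexpπ, hexpπ']
  have hσ0 : σ ≠ 0 := by
    intro h
    rw [hσdef, Complex.sinh, div_eq_zero_iff] at h
    have h2 : Complex.exp ((π:ℂ) * Afun a) = Complex.exp (-((π:ℂ) * Afun a)) := by
      rcases h with h | h
      · exact sub_eq_zero.mp h
      · exact absurd h two_ne_zero
    have h3 : Complex.exp (2 * ((π:ℂ) * Afun a)) = 1 := by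
      rw [two_mul, Complex.exp_add]
      nth_rewrite 2 [h2]
      rw [← Complex.exp_add, add_neg_cancel, Complex.exp_zero]
    rw [Complex.exp_eq_one_iff] at h3
    obtain ⟨k, hk⟩ := h3
    have hπ : (π : ℂ) ≠ 0 := Complex.ofReal_ne_zero.mpr Real.pi_ne_zero
    have hA : Afun a = (k : ℂ) * Complex.I := by
      apply mul_left_cancel₀ (mul_ne_zero (two_ne_zero (α := ℂ)) hπ)
      linear_combination hk
    have hAe : -2 * (a : ℂ) * Complex.I = (k : ℂ) * Complex.I * ((a : ℂ) + Complex.I) := by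
      rw [← hA, Afun, div_mul_cancel₀ _ haI]
    rw [Complex.ext_iff] at hAe
    obtain ⟨hre, him⟩ := hAe
    simp [Complex.mul_re, Complex.mul_im] at hre him
    rw [hre] at him
    push_cast at him
    linarith
  have hc : cC a = σ + r := by
    rw [cC, hσr, ← hrdef]; ring
  have h2σ : r⁻¹ = 2 * σ + r := by rw [hσr]; ring
  set t : ℕ → ℂ := fun k => Complex.exp (-(Afun a * ((thN (m + 2) Θ k : ℝ) : ℂ))) with htdef
  have ht0 : ∀ k, t k ≠ 0 := fun k => Complex.exp_ne_zero _
  have htz : t 0 = 1 := by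
    rw [htdef]
    simp [thN]
  have hrk : ∀ k : ℕ, rkC (m + 2) a Θ (k + 2) = t (k + 1) := fun k => rfl
  have hrk1 : rkC (m + 2) a Θ 1 = 1 := by
    rw [show rkC (m + 2) a Θ 1 = t 0 from rfl, htz]
  set kap : ℕ → ℂ := fun j => if j < lm then 2 * cC a else if j = lm then 2 * cC a + σ else 2 * r⁻¹ with hkapdef
  set yu : ℕ → ℂ := fun j => ((cC a + r) - kap j * t (j + 1)) / (σ * t (j + 1)) with hyudef
  set yg : ℕ → ℂ := fun j => (r * t (j + 1) - r) / (σ * t (j + 1)) with hygdef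
  set lamF : Fin (m + 2 - 1) := ⟨lm, by omega⟩ with hlamF
  have hwu : ∀ i : Fin (m + 2 - 1),
      σ * t ((i : ℕ) + 1) * (wseq yu (i : ℕ) + 2 * ∑ j ∈ Finset.range (i : ℕ), wseq yu j)
        = (cC a + r) - kap (i : ℕ) * t ((i : ℕ) + 1) := by
    intro i
    rw [sum_wseq]
    have h1 : wseq yu (i : ℕ) + 2 * Sseq yu (i : ℕ) = yu (i : ℕ) := by rw [wseq]; ring
    rw [h1, hyudef]
    exact mul_div_cancel₀ _ (mul_ne_zero hσ0 (ht0 _))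
  have hwg : ∀ i : Fin (m + 2 - 1),
      σ * t ((i : ℕ) + 1) * (wseq yg (i : ℕ) + 2 * ∑ j ∈ Finset.range (i : ℕ), wseq yg j)
        = r * t ((i : ℕ) + 1) - r := by
    intro i
    rw [sum_wseq]
    have h1 : wseq yg (i : ℕ) + 2 * Sseq yg (i : ℕ) = yg (i : ℕ) := by rw [wseq]; ring
    rw [h1, hygdef]
    exact mul_div_cancel₀ _ (mul_ne_zero hσ0 (ht0 _))
  have hCD : BlMat (m + 2) a Θ (lm + 1) *
      Matrix.diagonal (fun j : Fin (m + 2 - 1) => if j = lamF then 1 else t ((j : ℕ) + 1))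
      = Matrix.of (fun i j : Fin (m + 2 - 1) =>
          σ * t ((i : ℕ) + 1) * (if (j : ℕ) < (i : ℕ) then 2 else if (i : ℕ) = (j : ℕ) then 1 else 0)
            + (if j = lamF then (cC a + r) - kap (i : ℕ) * t ((i : ℕ) + 1) else 0)
            + (r * t ((i : ℕ) + 1) - r)) := by
    ext i j
    rw [Matrix.mul_diagonal, Matrix.of_apply]
    by_cases hj : j = lamF
    · subst hj
      rw [if_pos rfl, if_pos rfl, mul_one]
      simp only [BlMat, Matrix.of_apply]
      rw [if_pos (rfl : ((lamF : Fin (m+2-1)) : ℕ) + 1 = lm + 1)]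
      simp only [bvec, hrk, hrk1, hkapdef, ← hrdef,
        show ((lamF : Fin (m+2-1)) : ℕ) = lm from rfl]
      rw [mul_one, div_one]
      rcases lt_trichotomy ((i : ℕ)) lm with hcase | hcase | hcase
      · rw [if_neg (by omega : ¬ lm < (i : ℕ)), if_neg (by omega : ¬ (i : ℕ) = lm),
          if_pos hcase]
        linear_combination 2 * t ((i:ℕ)+1) * hc - t ((i:ℕ)+1) * h2σ
      · rw [if_neg (by omega : ¬ lm < (i : ℕ)), if_pos hcase,
          if_neg (by omega : ¬ (i : ℕ) < lm), if_pos hcase]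
        linear_combination 2 * t ((i:ℕ)+1) * hc - t ((i:ℕ)+1) * h2σ
      · rw [if_pos hcase, if_neg (by omega : ¬ (i : ℕ) < lm),
          if_neg (by omega : ¬ (i : ℕ) = lm)]
        linear_combination t ((i:ℕ)+1) * h2σ
    · rw [if_neg hj, if_neg hj, add_zero]
      have hjlm : (j : ℕ) ≠ lm := fun h => hj (Fin.ext (show (j:ℕ) = ((lamF : Fin (m+2-1)):ℕ) from h))
      simp only [BlMat, Matrix.of_apply]
      rw [if_neg (by omega : ¬ (j : ℕ) + 1 = lm + 1)]
      simp only [Bmat, Matrix.of_apply, hrk, hrk1, ← hrdef]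
      rcases lt_trichotomy ((i : ℕ)) ((j : ℕ)) with hcase | hcase | hcase
      · rw [if_neg (by omega : ¬ (i : ℕ) = (j : ℕ)), if_pos hcase,
          if_neg (by omega : ¬ (j : ℕ) < (i : ℕ)), if_neg (by omega : ¬ (i : ℕ) = (j : ℕ)),
          div_mul_cancel₀ _ (ht0 _)]
        ring
      · rw [if_pos hcase, if_neg (by omega : ¬ (j : ℕ) < (i : ℕ)), if_pos hcase]
        have hts : t ((j : ℕ) + 1) = t ((i : ℕ) + 1) := by rw [hcase]
        rw [hts, div_mul_cancel₀ _ (ht0 _)]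
        linear_combination t ((i:ℕ)+1) * hc
      · rw [if_neg (by omega : ¬ (i : ℕ) = (j : ℕ)), if_neg (by omega : ¬ (i : ℕ) < (j : ℕ)),
          if_pos hcase, div_mul_cancel₀ _ (ht0 _)]
        linear_combination t ((i:ℕ)+1) * h2σ
  have key : (BlMat (m + 2) a Θ (lm + 1)).det *
      (∏ j : Fin (m + 2 - 1), (if j = lamF then 1 else t ((j : ℕ) + 1)))
      = (∏ i : Fin (m + 2 - 1), (σ * t ((i : ℕ) + 1))) *
        ((1 + wseq yu lm) * (1 + ∑ j ∈ Finset.range (m + 1), wseq yg j)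
          - wseq yg lm * ∑ j ∈ Finset.range (m + 1), wseq yu j) := by
    rw [← Matrix.det_diagonal, ← Matrix.det_mul, hCD]
    exact abstract_det (m + 1) σ (fun i => t ((i : ℕ) + 1)) _ _ lamF (wseq yu) (wseq yg) hwu hwg
  have hprod1 : (∏ i : Fin (m + 2 - 1), (σ * t ((i : ℕ) + 1)))
      = σ ^ (m + 1) * (t (lm + 1) * ∏ j ∈ Finset.univ.erase lamF, t ((j : ℕ) + 1)) := by
    rw [Finset.prod_mul_distrib, Finset.prod_const, Finset.card_univ]
    congr 1
    · rw [Fintype.card_fin]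
      rfl
    · exact (Finset.mul_prod_erase Finset.univ (fun j : Fin (m + 2 - 1) => t ((j : ℕ) + 1))
        (Finset.mem_univ lamF)).symm
  have hprod2 : (∏ j : Fin (m + 2 - 1), (if j = lamF then (1:ℂ) else t ((j : ℕ) + 1)))
      = ∏ j ∈ Finset.univ.erase lamF, t ((j : ℕ) + 1) := by
    rw [← Finset.mul_prod_erase Finset.univ _ (Finset.mem_univ lamF), if_pos rfl, one_mul]
    exact Finset.prod_congr rfl fun j hjj => if_neg (Finset.mem_erase.mp hjj).1
  have herase0 : (∏ j ∈ Finset.univ.erase lamF, t ((j : ℕ) + 1)) ≠ 0 :=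
    Finset.prod_ne_zero_iff.mpr fun j _ => ht0 _
  have hmain : (BlMat (m + 2) a Θ (lm + 1)).det
      = σ ^ (m + 1) * t (lm + 1) *
        ((1 + wseq yu lm) * (1 + ∑ j ∈ Finset.range (m + 1), wseq yg j)
          - wseq yg lm * ∑ j ∈ Finset.range (m + 1), wseq yu j) := by
    apply mul_right_cancel₀ herase0
    rw [hprod2] at key
    rw [key, hprod1]
    ring
  rw [hmain]
  have hred : ∀ X Y : ℂ, σ * t (lm + 1) * X = Y →
      σ ^ (m + 1) * t (lm + 1) * X = σ ^ (m + 2 - 2) * Y := by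
    intro X Y h
    rw [show σ ^ (m + 2 - 2) = σ ^ m from rfl, pow_succ]
    linear_combination σ ^ m * h
  apply hred
  set F : ℕ → ℂ := fun i => ∑ j ∈ Finset.range i, (-1 : ℂ) ^ j * (t (j + 1))⁻¹ with hFdef
  have hstep : ∀ N : ℕ, (∑ k ∈ Finset.range (N + 1), (-1 : ℂ) ^ k * (t k)⁻¹) = 1 - F N := by
    intro N
    rw [Finset.sum_range_succ']
    simp only [pow_zero, htz, one_mul, inv_one]
    rw [hFdef]
    rw [Finset.sum_congr rfl fun j (_ : j ∈ Finset.range N) =>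
      (show (-1 : ℂ) ^ (j + 1) * (t (j + 1))⁻¹ = -((-1 : ℂ) ^ j * (t (j + 1))⁻¹) from by
        rw [pow_succ]; ring)]
    rw [Finset.sum_neg_distrib]
    ring
  have hrC : rC a = Complex.exp (-(Afun a * (π : ℂ))) := rfl
  have hterm1 : ∀ k : ℕ, Complex.exp (Afun a * ((thN (m+2) Θ k - thN (m+2) Θ (lm+1) + π : ℝ) : ℂ))
      = (t k)⁻¹ * (t (lm + 1) * r⁻¹) := by
    intro k
    rw [htdef]
    simp only []
    rw [hrdef, hrC, ← Complex.exp_neg, ← Complex.exp_neg, ← Complex.exp_add, ← Complex.exp_add]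
    congr 1
    push_cast
    ring
  have hterm2 : ∀ k : ℕ, Complex.exp (Afun a * ((thN (m+2) Θ k - thN (m+2) Θ (lm+1) - π : ℝ) : ℂ))
      = (t k)⁻¹ * (t (lm + 1) * r) := by
    intro k
    rw [htdef]
    simp only []
    rw [hrdef, hrC, ← Complex.exp_neg, ← Complex.exp_add, ← Complex.exp_add]
    congr 1
    push_cast
    ring
  have hsum1 : (∑ k ∈ Finset.range (lm + 1), (-1 : ℂ) ^ (lm + 1 + k) *
        Complex.exp (Afun a * ((thN (m+2) Θ k - thN (m+2) Θ (lm+1) + π : ℝ) : ℂ)))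
      = (-1 : ℂ) ^ (lm + 1) * (t (lm + 1) * r⁻¹) * (1 - F lm) := by
    rw [← hstep lm, Finset.mul_sum]
    refine Finset.sum_congr rfl fun k _ => ?_
    rw [hterm1 k, pow_add]
    ring
  have hsum2 : (∑ k ∈ Finset.Icc (lm + 1) (m + 2 - 1), (-1 : ℂ) ^ (lm + 1 + k) *
        Complex.exp (Afun a * ((thN (m+2) Θ k - thN (m+2) Θ (lm+1) - π : ℝ) : ℂ)))
      = (-1 : ℂ) ^ (lm + 1) * (t (lm + 1) * r) * (F lm - F (m + 1)) := by
    have hIcc : Finset.Icc (lm + 1) (m + 2 - 1) = Finset.Ico (lm + 1) (m + 2) := by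
      rw [show m + 2 = (m + 2 - 1) + 1 from rfl, Finset.Ico_add_one_right_eq_Icc]
      rfl
    rw [hIcc, Finset.sum_Ico_eq_sub _ (by omega : lm + 1 ≤ m + 2)]
    have e1 : ∀ N : ℕ, (∑ k ∈ Finset.range N, (-1 : ℂ) ^ (lm + 1 + k) *
          Complex.exp (Afun a * ((thN (m+2) Θ k - thN (m+2) Θ (lm+1) - π : ℝ) : ℂ)))
        = ((-1 : ℂ) ^ (lm + 1) * (t (lm + 1) * r)) * ∑ k ∈ Finset.range N, (-1 : ℂ) ^ k * (t k)⁻¹ := by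
      intro N
      rw [Finset.mul_sum]
      refine Finset.sum_congr rfl fun k _ => ?_
      rw [hterm2 k, pow_add]
      ring
    rw [e1 (m + 2), e1 (lm + 1), hstep (m + 1), hstep lm]
    ring
  have hyS : ∀ i : ℕ, (∑ j ∈ Finset.range i, (-1:ℂ)^j * yu j)
      = ((cC a + r)/σ) * F i - (∑ j ∈ Finset.range i, (-1:ℂ)^j * kap j)/σ := by
    intro i
    rw [hFdef, Finset.mul_sum, Finset.sum_div, ← Finset.sum_sub_distrib]
    refine Finset.sum_congr rfl fun j _ => ?_
    rw [hyudef]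
    simp only []
    field_simp [hσ0, ht0 (j + 1)]
  have hgS : ∀ i : ℕ, (∑ j ∈ Finset.range i, (-1:ℂ)^j * yg j)
      = (r/σ) * (∑ j ∈ Finset.range i, (-1:ℂ)^j) - (r/σ) * F i := by
    intro i
    rw [hFdef, Finset.mul_sum, Finset.mul_sum, ← Finset.sum_sub_distrib]
    refine Finset.sum_congr rfl fun j _ => ?_
    rw [hygdef]
    simp only []
    field_simp [hσ0, ht0 (j + 1)]
  have hkaplam : (∑ j ∈ Finset.range lm, (-1:ℂ)^j * kap j)
      = 2 * cC a * (∑ j ∈ Finset.range lm, (-1:ℂ)^j) := by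
    rw [Finset.mul_sum]
    refine Finset.sum_congr rfl fun j hjj => ?_
    rw [hkapdef]
    simp only []
    rw [if_pos (Finset.mem_range.mp hjj)]
    ring
  have hkapn : (∑ j ∈ Finset.range (m+1), (-1:ℂ)^j * kap j)
      = 2 * cC a * (∑ j ∈ Finset.range lm, (-1:ℂ)^j) + (2 * cC a + σ) * (-1:ℂ)^lm
        + 2 * r⁻¹ * ((∑ j ∈ Finset.range (m+1), (-1:ℂ)^j)
            - (∑ j ∈ Finset.range lm, (-1:ℂ)^j) - (-1:ℂ)^lm) := by
    have hsplit : (∑ j ∈ Finset.range (m+1), (-1:ℂ)^j * kap j)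
        = (∑ j ∈ Finset.range (lm+1), (-1:ℂ)^j * kap j)
          + ∑ j ∈ Finset.Ico (lm+1) (m+1), (-1:ℂ)^j * kap j := by
      rw [Finset.range_eq_Ico,
        ← Finset.sum_Ico_consecutive _ (by omega : 0 ≤ lm + 1) (by omega : lm + 1 ≤ m + 1),
        ← Finset.range_eq_Ico]
    rw [hsplit, Finset.sum_range_succ, hkaplam]
    have h1 : kap lm = 2 * cC a + σ := by rw [hkapdef]; simp
    have h2 : (∑ j ∈ Finset.Ico (lm+1) (m+1), (-1:ℂ)^j * kap j)
        = 2 * r⁻¹ * ∑ j ∈ Finset.Ico (lm+1) (m+1), (-1:ℂ)^j := by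
      rw [Finset.mul_sum]
      refine Finset.sum_congr rfl fun j hjj => ?_
      have hmem := Finset.mem_Ico.mp hjj
      rw [hkapdef]
      simp only []
      rw [if_neg (by omega), if_neg (by omega)]
      ring
    rw [h1, h2, Finset.sum_Ico_eq_sub _ (by omega : lm + 1 ≤ m + 1), Finset.sum_range_succ,
      Finset.sum_range_succ (fun x => (-1:ℂ)^x) lm]
    ring
  have hSulam : Sseq yu lm = (-1:ℂ)^(lm+1) * (((cC a + r)/σ) * F lm
      - (2 * cC a * (∑ j ∈ Finset.range lm, (-1:ℂ)^j))/σ) := by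
    rw [Sseq_eq, hyS lm, hkaplam]
  have hSglam : Sseq yg lm = (-1:ℂ)^(lm+1) * ((r/σ) * (∑ j ∈ Finset.range lm, (-1:ℂ)^j)
      - (r/σ) * F lm) := by
    rw [Sseq_eq, hgS lm]
  have hSun : Sseq yu (m+1) = (-1:ℂ)^(m+2) * (((cC a + r)/σ) * F (m+1)
      - (2 * cC a * (∑ j ∈ Finset.range lm, (-1:ℂ)^j) + (2 * cC a + σ) * (-1:ℂ)^lm
        + 2 * r⁻¹ * ((∑ j ∈ Finset.range (m+1), (-1:ℂ)^j)
            - (∑ j ∈ Finset.range lm, (-1:ℂ)^j) - (-1:ℂ)^lm))/σ) := by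
    rw [Sseq_eq, hyS (m+1), hkapn]
  have hSgn : Sseq yg (m+1) = (-1:ℂ)^(m+2) * ((r/σ) * (∑ j ∈ Finset.range (m+1), (-1:ℂ)^j)
      - (r/σ) * F (m+1)) := by
    rw [Sseq_eq, hgS (m+1)]
  have hyulm : yu lm = ((cC a + r) - (2 * cC a + σ) * t (lm+1)) / (σ * t (lm+1)) := by
    rw [hyudef]
    simp only []
    rw [show kap lm = 2 * cC a + σ from by rw [hkapdef]; simp]
  have hyglm : yg lm = (r * t (lm+1) - r) / (σ * t (lm+1)) := by rw [hygdef]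
  rw [sum_wseq yu (m+1), sum_wseq yg (m+1)]
  simp only [wseq]
  rw [hSulam, hSglam, hSun, hSgn, hyulm, hyglm, hsum1, hsum2, hexpπ, hexpπ',
    altSum_eq lm, altSum_eq (m+1)]
  have hTm : t (lm + 1) ≠ 0 := ht0 _
  have hd : r⁻¹ - r ≠ 0 := fun h => hσ0 (by rw [hσr, h]; norm_num)
  rw [hc, h2σ]
  clear_value t kap yu yg F σ r
  clear hrdef hσdef htdef hkapdef hyudef hygdef hFdef hwu hwg hCD key hmain hrk hrk1 hterm1 hterm2 hstep hsum1 hsum2 hyS hgS hkaplam hkapn hSulam hSglam hSun hSgn hyulm hyglm hred herase0 hprod1 hprod2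
  rcases Nat.even_or_odd lm with hL | hL <;> rcases Nat.even_or_odd m with hm | hm
  · rw [if_pos hL, if_neg (by simp [Nat.even_add_one, hm] : ¬ Even (m+1)),
      hL.neg_one_pow, (by rw [pow_succ, hL.neg_one_pow]; norm_num : (-1:ℂ)^(lm+1) = -1),
      (by rw [show m+2 = m+1+1 from rfl, pow_succ, pow_succ, hm.neg_one_pow]; norm_num : (-1:ℂ)^(m+2) = 1)]
    field_simp [hσ0, hTm]
    ring
  · rw [if_pos hL, if_pos (by simp [Nat.even_add_one, hm, Nat.not_even_iff_odd] : Even (m+1)),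
      hL.neg_one_pow, (by rw [pow_succ, hL.neg_one_pow]; norm_num : (-1:ℂ)^(lm+1) = -1),
      (by rw [show m+2 = m+1+1 from rfl, pow_succ, pow_succ, hm.neg_one_pow]; norm_num : (-1:ℂ)^(m+2) = -1)]
    field_simp [hσ0, hTm]
    ring
  · rw [if_neg (by simpa [Nat.not_even_iff_odd] using hL), hL.neg_one_pow,
      if_neg (by simp [Nat.even_add_one, hm] : ¬ Even (m+1)),
      (by rw [pow_succ, hL.neg_one_pow]; norm_num : (-1:ℂ)^(lm+1) = 1),
      (by rw [show m+2 = m+1+1 from rfl, pow_succ, pow_succ, hm.neg_one_pow]; norm_num : (-1:ℂ)^(m+2) = 1)]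
    field_simp [hσ0, hTm]
    ring
  · rw [if_neg (by simpa [Nat.not_even_iff_odd] using hL), hL.neg_one_pow,
      if_pos (by simp [Nat.even_add_one, hm, Nat.not_even_iff_odd] : Even (m+1)),
      (by rw [pow_succ, hL.neg_one_pow]; norm_num : (-1:ℂ)^(lm+1) = 1),
      (by rw [show m+2 = m+1+1 from rfl, pow_succ, pow_succ, hm.neg_one_pow]; norm_num : (-1:ℂ)^(m+2) = -1)]
    field_simp [hσ0, hTm]
    ring

end
end

section
/- Let M ≥ 1 be an integer and r, r_1, …, r_M ∈ ℂ \ {0}. Let 𝒜 be the M×M complex matrix (indexed by 1 ≤ k,m ≤ M) with 𝒜_{kk} = (r + r^{-1})/2, 𝒜_{km} = r · r_k/r_m for k < m, and 𝒜_{km} = r^{-1} · r_k/r_m for k > m. Then det 𝒜 = ((r - r^{-1})/2)^{2p} · ((r + r^{-1})/2)^q, where M = 2p + q with p a nonnegative integer and q ∈ {0,1}. -/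
open Finset

noncomputable section

set_option maxHeartbeats 1000000 in
theorem detB_aux (n : ℕ) (r : ℂ) :
    (Matrix.of fun k m : Fin (n + 1) =>
        if (k : ℕ) = (m : ℕ) then (r + r⁻¹) / 2
        else if (k : ℕ) < (m : ℕ) then r else r⁻¹).det =
      ((r - r⁻¹) / 2) ^ n *
        (if Even n then (r + r⁻¹) / 2 else (r - r⁻¹) / 2) := by
  set a : ℂ := (r + r⁻¹) / 2 with ha
  set s : ℂ := (r - r⁻¹) / 2 with hs
  set B : Matrix (Fin (n + 1)) (Fin (n + 1)) ℂ :=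
    Matrix.of fun k m : Fin (n + 1) =>
      if (k : ℕ) = (m : ℕ) then a else if (k : ℕ) < (m : ℕ) then r else r⁻¹ with hB
  set N : Matrix (Fin (n + 1)) (Fin (n + 1)) ℂ :=
    Matrix.of fun k m : Fin (n + 1) => if (m : ℕ) = (k : ℕ) + 1 then 1 else 0 with hN
  set T : Matrix (Fin (n + 1)) (Fin (n + 1)) ℂ :=
    Matrix.of fun k m : Fin (n + 1) =>
      if (k : ℕ) < n then (if (m : ℕ) = (k : ℕ) then s else 0)
      else if (m : ℕ) < n then (if Even (m : ℕ) then r⁻¹ else 0)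
      else if Even (m : ℕ) then a else s with hT
  have key : T * (1 + N) = (1 - N) * B := by
    ext k j
    have hkM : (k : ℕ) < n + 1 := k.isLt
    have hjM : (j : ℕ) < n + 1 := j.isLt
    have hTN : (T * N) k j =
        if (j : ℕ) = 0 then 0
        else T k ⟨(j : ℕ) - 1, lt_of_le_of_lt (Nat.sub_le _ _) j.isLt⟩ := by
      rw [Matrix.mul_apply]
      split
      · next hj =>
        apply Finset.sum_eq_zero
        intro l _
        have hl : ¬ ((j : ℕ) = (l : ℕ) + 1) := by omega
        simp [hN, hl]
      · next hj =>
        rw [Finset.sum_eq_single (⟨(j : ℕ) - 1, lt_of_le_of_lt (Nat.sub_le _ _) j.isLt⟩ : Fin (n+1))]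
        · have h1 : (j : ℕ) = ((j : ℕ) - 1) + 1 := by omega
          simp [hN, ← h1]
        · intro b _ hb
          have hb' : ¬ ((j : ℕ) = (b : ℕ) + 1) := by
            intro h
            exact hb (Fin.ext (by simp; omega))
          simp [hN, hb']
        · intro h
          exact absurd (Finset.mem_univ _) h
    have hNB : (N * B) k j =
        if hk : (k : ℕ) + 1 < n + 1 then B ⟨(k : ℕ) + 1, hk⟩ j else 0 := by
      rw [Matrix.mul_apply]
      split
      · next hk =>
        rw [Finset.sum_eq_single (⟨(k : ℕ) + 1, hk⟩ : Fin (n+1))]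
        · simp [hN]
        · intro b _ hb
          have hb' : ¬ ((b : ℕ) = (k : ℕ) + 1) := by
            intro h
            exact hb (Fin.ext (by simp [h]))
          simp [hN, hb']
        · intro h
          exact absurd (Finset.mem_univ _) h
      · next hk =>
        apply Finset.sum_eq_zero
        intro l _
        have hl : ¬ ((l : ℕ) = (k : ℕ) + 1) := by omega
        simp [hN, hl]
    rw [Matrix.mul_add, Matrix.mul_one, Matrix.sub_mul, Matrix.one_mul,
      Matrix.add_apply, Matrix.sub_apply, hTN, hNB]
    simp only [hT, hB, Matrix.of_apply, Nat.even_iff]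
    split_ifs <;> first | (exfalso; omega) | ring | (simp only [ha, hs]; ring)
  have d1 : (1 + N).det = 1 := by
    rw [Matrix.det_of_upperTriangular (by
      intro i j hij
      have h : (j : ℕ) < (i : ℕ) := hij
      have h1 : ¬ ((i : ℕ) = (j : ℕ)) := by omega
      have h2 : ¬ ((j : ℕ) = (i : ℕ) + 1) := by omega
      simp [Matrix.add_apply, Matrix.one_apply, hN, h2, Fin.ext_iff, h1])]
    simp [Matrix.add_apply, Matrix.one_apply, hN]
  have d2 : (1 - N).det = 1 := by
    rw [Matrix.det_of_upperTriangular (by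
      intro i j hij
      have h : (j : ℕ) < (i : ℕ) := hij
      have h1 : ¬ ((i : ℕ) = (j : ℕ)) := by omega
      have h2 : ¬ ((j : ℕ) = (i : ℕ) + 1) := by omega
      simp [Matrix.sub_apply, Matrix.one_apply, hN, h2, Fin.ext_iff, h1])]
    simp [Matrix.sub_apply, Matrix.one_apply, hN]
  have dT : T.det = s ^ n * (if Even n then a else s) := by
    rw [Matrix.det_of_lowerTriangular T (by
      intro i j hij
      have h : (i : ℕ) < (j : ℕ) := hij
      have hjM : (j : ℕ) < n + 1 := j.isLt
      simp only [hT, Matrix.of_apply]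
      split_ifs <;> first | rfl | omega | (exfalso; omega))]
    have hdiag : ∀ i : Fin (n + 1), T i i =
        (fun x : ℕ => if x < n then s else if Even x then a else s) (i : ℕ) := by
      intro i
      simp only [hT, Matrix.of_apply]
      split_ifs <;> first | rfl | omega | (exfalso; omega)
    rw [Finset.prod_congr rfl (fun i _ => hdiag i),
      Fin.prod_univ_eq_prod_range (fun x : ℕ => if x < n then s else if Even x then a else s),
      Finset.prod_range_succ]
    have h1 : ∀ x ∈ Finset.range n,
        (if x < n then s else if Even x then a else s) = s := by
      intro x hx
      rw [if_pos (Finset.mem_range.mp hx)]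
    rw [Finset.prod_congr rfl h1, Finset.prod_const, Finset.card_range, if_neg (lt_irrefl n)]
  have hdet := congrArg Matrix.det key
  rw [Matrix.det_mul, Matrix.det_mul, d1, d2, mul_one, one_mul] at hdet
  rw [← hdet, dT]


set_option maxHeartbeats 1000000 in
theorem det_abstract_A (M : ℕ) (hM : 1 ≤ M) (r : ℂ) (hr : r ≠ 0)
    (rv : Fin M → ℂ) (hrv : ∀ k, rv k ≠ 0)
    (p q : ℕ) (hq : q = 0 ∨ q = 1) (hMpq : M = 2 * p + q) :
    (Matrix.of fun k m : Fin M =>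
        if (k : ℕ) = (m : ℕ) then (r + r⁻¹) / 2
        else if (k : ℕ) < (m : ℕ) then r * rv k / rv m
        else r⁻¹ * rv k / rv m).det =
      ((r - r⁻¹) / 2) ^ (2 * p) * ((r + r⁻¹) / 2) ^ q := by
  obtain ⟨n, rfl⟩ : ∃ n, M = n + 1 := ⟨M - 1, by omega⟩
  set B : Matrix (Fin (n + 1)) (Fin (n + 1)) ℂ :=
    Matrix.of fun k m : Fin (n + 1) =>
      if (k : ℕ) = (m : ℕ) then (r + r⁻¹) / 2
      else if (k : ℕ) < (m : ℕ) then r else r⁻¹ with hB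
  have hA : (Matrix.of fun k m : Fin (n + 1) =>
        if (k : ℕ) = (m : ℕ) then (r + r⁻¹) / 2
        else if (k : ℕ) < (m : ℕ) then r * rv k / rv m
        else r⁻¹ * rv k / rv m) =
      Matrix.diagonal rv * B * Matrix.diagonal (fun i => (rv i)⁻¹) := by
    ext k m
    rw [Matrix.mul_diagonal, Matrix.diagonal_mul]
    simp only [hB, Matrix.of_apply]
    by_cases hkm : (k : ℕ) = (m : ℕ)
    · have : k = m := Fin.ext hkm
      subst this
      rw [if_pos rfl, if_pos rfl, mul_comm (rv k), mul_assoc,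
        mul_inv_cancel₀ (hrv k), mul_one]
    · rw [if_neg hkm, if_neg hkm]
      by_cases hlt : (k : ℕ) < (m : ℕ)
      · rw [if_pos hlt, if_pos hlt, div_eq_mul_inv]
        ring
      · rw [if_neg hlt, if_neg hlt, div_eq_mul_inv]
        ring
  rw [hA, Matrix.det_mul, Matrix.det_mul, Matrix.det_diagonal, Matrix.det_diagonal]
  have hprod : (∏ i, rv i) * (∏ i, (rv i)⁻¹) = 1 := by
    rw [← Finset.prod_mul_distrib]
    rw [Finset.prod_congr rfl (fun i _ => mul_inv_cancel₀ (hrv i))]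
    simp
  have : (∏ i, rv i) * B.det * ∏ i, (rv i)⁻¹ = B.det := by
    rw [mul_comm (∏ i, rv i) B.det, mul_assoc, hprod, mul_one]
  rw [this, hB, detB_aux n r]
  rcases hq with rfl | rfl
  · have hn : ¬ Even n := by rw [Nat.even_iff]; omega
    rw [if_neg hn, ← pow_succ, pow_zero, mul_one, show n + 1 = 2 * p from by omega]
  · have hn : Even n := ⟨p, by omega⟩
    rw [if_pos hn, pow_one, show n = 2 * p from by omega]

end
end

section
/- Let M ≥ 2 be an integer and Θ = (θ_1,…,θ_{M-1}) ∈ ℝ^{M-1}. Then lim_{a→∞} [ -a² (d/da) 𝒦(a,Θ) ] = ((-1)^M - 1)π - 2(-1)^M Σ_{k=1}^{M-1} (-1)^k (θ_k - π) e^{-2iθ_k}. -/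
open Complex Real Finset Filter Topology

noncomputable section

/-- `𝒦(a,Θ)`, for angles `θ : ℕ → ℝ` (with `θ 0 = 0` understood). -/
def KfunN (M : ℕ) (θ : ℕ → ℝ) (a : ℝ) : ℂ :=
  (Complex.exp ((π : ℂ) * Afun a) + (-1 : ℂ) ^ M * Complex.exp (-((π : ℂ) * Afun a))) / 2 +
    (-1 : ℂ) ^ M * ∑ k ∈ Finset.Icc 1 (M - 1),
      (-1 : ℂ) ^ k * Complex.exp (Afun a * ((θ k - π : ℝ) : ℂ))


lemma denom_ne (a : ℝ) : ((a:ℂ) + Complex.I) ≠ 0 := by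
  intro h
  have := congrArg Complex.im h
  simp at this

lemma hasDerivAt_Afun (a : ℝ) :
    HasDerivAt (fun x:ℝ => Afun x) (2/((a:ℂ)+Complex.I)^2) a := by
  have hx : HasDerivAt (fun x:ℝ => (x:ℂ)) 1 a := Complex.ofRealCLM.hasDerivAt
  have hnum : HasDerivAt (fun x:ℝ => -2*(x:ℂ)*Complex.I) (-2*Complex.I) a := by
    simpa using (hx.const_mul (-2:ℂ)).mul_const Complex.I
  have hden : HasDerivAt (fun x:ℝ => (x:ℂ)+Complex.I) 1 a := hx.add_const _
  have h : HasDerivAt (fun x:ℝ => Afun x) _ a := hnum.div hden (denom_ne a)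
  convert h using 1
  have hI : (Complex.I)^2 = -1 := Complex.I_sq
  congr 1
  ring_nf
  rw [Complex.I_sq]
  ring

def Ffun (M : ℕ) (θ : ℕ → ℝ) (a : ℝ) : ℂ :=
  (π:ℂ) * (Complex.exp ((π:ℂ) * Afun a) - (-1:ℂ)^M * Complex.exp (-((π:ℂ) * Afun a))) / 2 +
    (-1:ℂ)^M * ∑ k ∈ Finset.Icc 1 (M - 1),
      (-1:ℂ)^k * ((θ k - π : ℝ) : ℂ) * Complex.exp (Afun a * ((θ k - π : ℝ) : ℂ))

lemma hasDerivAt_K (M : ℕ) (θ : ℕ → ℝ) (a : ℝ) :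
    HasDerivAt (fun x:ℝ => KfunN M θ x)
      ((2/((a:ℂ)+Complex.I)^2) * Ffun M θ a) a := by
  set A' : ℂ := 2/((a:ℂ)+Complex.I)^2 with hA'
  have hA := hasDerivAt_Afun a
  have h1 : HasDerivAt (fun x:ℝ => Complex.exp ((π:ℂ) * Afun x))
      (Complex.exp ((π:ℂ) * Afun a) * ((π:ℂ) * A')) a := (hA.const_mul (π:ℂ)).cexp
  have h2 : HasDerivAt (fun x:ℝ => Complex.exp (-((π:ℂ) * Afun x)))
      (Complex.exp (-((π:ℂ) * Afun a)) * (-((π:ℂ) * A'))) a := (hA.const_mul (π:ℂ)).neg.cexp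
  have h3 : ∀ k ∈ Finset.Icc 1 (M-1), HasDerivAt
      (fun x:ℝ => (-1:ℂ)^k * Complex.exp (Afun x * ((θ k - π : ℝ) : ℂ)))
      ((-1:ℂ)^k * (Complex.exp (Afun a * ((θ k - π : ℝ) : ℂ)) * (A' * ((θ k - π : ℝ) : ℂ)))) a :=
    fun k _ => ((hA.mul_const _).cexp).const_mul _
  have hsum := HasDerivAt.fun_sum h3
  have h : HasDerivAt (fun x:ℝ => KfunN M θ x) _ a := ((h1.add (h2.const_mul ((-1:ℂ)^M))).div_const 2).add (hsum.const_mul ((-1:ℂ)^M))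
  convert h using 1
  unfold Ffun
  rw [Finset.mul_sum, Finset.mul_sum, mul_add, Finset.mul_sum]
  congr 1
  · ring
  · exact Finset.sum_congr rfl fun k _ => by ring

lemma tendsto_ratio : Tendsto (fun a:ℝ => (a:ℂ)/((a:ℂ)+Complex.I)) atTop (𝓝 1) := by
  have h0 : Tendsto (fun a:ℝ => Complex.I/((a:ℂ)+Complex.I)) atTop (𝓝 0) := by
    apply squeeze_zero_norm' (a := fun x:ℝ => 1/x)
    · filter_upwards [eventually_ge_atTop (1:ℝ)] with a ha
      rw [norm_div, Complex.norm_I]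
      apply one_div_le_one_div_of_le (by linarith)
      have h := Complex.abs_re_le_norm ((a:ℂ)+Complex.I)
      simp only [Complex.add_re, Complex.ofReal_re, Complex.I_re, add_zero] at h
      calc a ≤ |a| := le_abs_self a
        _ ≤ _ := h
    · simpa [one_div] using tendsto_inv_atTop_zero
  have heq : (fun a:ℝ => (a:ℂ)/((a:ℂ)+Complex.I))
      = fun a:ℝ => 1 - Complex.I/((a:ℂ)+Complex.I) := by
    funext a
    field_simp [denom_ne a]
    ring
  rw [heq]
  simpa using tendsto_const_nhds.sub h0

lemma tendsto_Afun : Tendsto (fun a:ℝ => Afun a) atTop (𝓝 (-2*Complex.I)) := by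
  have heq : (fun a:ℝ => Afun a)
      = fun a:ℝ => (-2*Complex.I) * ((a:ℂ)/((a:ℂ)+Complex.I)) := by
    funext a; unfold Afun; ring
  rw [heq]
  simpa using tendsto_ratio.const_mul (-2*Complex.I)

lemma tendsto_factor1 :
    Tendsto (fun a:ℝ => -(a:ℂ)^2 * (2/((a:ℂ)+Complex.I)^2)) atTop (𝓝 (-2)) := by
  have heq : (fun a:ℝ => -(a:ℂ)^2 * (2/((a:ℂ)+Complex.I)^2))
      = fun a:ℝ => (-2) * ((a:ℂ)/((a:ℂ)+Complex.I))^2 := by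
    funext a
    rw [div_pow]
    ring
  rw [heq]
  simpa using (tendsto_ratio.pow 2).const_mul (-2:ℂ)

def Gfun (M : ℕ) (θ : ℕ → ℝ) (z : ℂ) : ℂ :=
  (π:ℂ) * (Complex.exp ((π:ℂ) * z) - (-1:ℂ)^M * Complex.exp (-((π:ℂ) * z))) / 2 +
    (-1:ℂ)^M * ∑ k ∈ Finset.Icc 1 (M - 1),
      (-1:ℂ)^k * ((θ k - π : ℝ) : ℂ) * Complex.exp (z * ((θ k - π : ℝ) : ℂ))

lemma continuous_Gfun (M : ℕ) (θ : ℕ → ℝ) : Continuous (Gfun M θ) := by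
  unfold Gfun
  fun_prop

lemma tendsto_Ffun (M : ℕ) (θ : ℕ → ℝ) :
    Tendsto (fun a:ℝ => Ffun M θ a) atTop (𝓝 (Gfun M θ (-2*Complex.I))) :=
  ((continuous_Gfun M θ).tendsto _).comp tendsto_Afun

theorem limit_deriv_K (M : ℕ) (hM : 2 ≤ M) (Θ : Fin (M - 1) → ℝ) :
    Tendsto (fun a : ℝ => -(a : ℂ) ^ 2 * deriv (fun x : ℝ => KfunN M (thN M Θ) x) a)
      atTop
      (𝓝 (((-1 : ℂ) ^ M - 1) * (π : ℂ) -
        2 * (-1 : ℂ) ^ M * ∑ k ∈ Finset.Icc 1 (M - 1),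
          (-1 : ℂ) ^ k * ((thN M Θ k - π : ℝ) : ℂ) *
            Complex.exp (-2 * Complex.I * (thN M Θ k : ℂ)))) := by
  set θ := thN M Θ with hθ
  have heq : (fun a : ℝ => -(a:ℂ)^2 * deriv (fun x:ℝ => KfunN M θ x) a)
      = fun a : ℝ => (-(a:ℂ)^2 * (2/((a:ℂ)+Complex.I)^2)) * Ffun M θ a := by
    funext a
    rw [(hasDerivAt_K M θ a).deriv]; ring
  rw [heq]
  have hval : (((-1 : ℂ) ^ M - 1) * (π : ℂ) -
        2 * (-1 : ℂ) ^ M * ∑ k ∈ Finset.Icc 1 (M - 1),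
          (-1 : ℂ) ^ k * ((θ k - π : ℝ) : ℂ) *
            Complex.exp (-2 * Complex.I * (θ k : ℂ)))
      = (-2) * Gfun M θ (-2*Complex.I) := by
    have e1 : Complex.exp ((π:ℂ)*(-2*Complex.I)) = 1 := by
      rw [show (π:ℂ)*(-2*Complex.I) = -(2*π*Complex.I) by ring, Complex.exp_neg,
        Complex.exp_two_pi_mul_I, inv_one]
    have e2 : Complex.exp (-((π:ℂ)*(-2*Complex.I))) = 1 := by
      rw [show -((π:ℂ)*(-2*Complex.I)) = 2*π*Complex.I by ring, Complex.exp_two_pi_mul_I]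
    have e3 : ∑ k ∈ Finset.Icc 1 (M-1),
        (-1:ℂ)^k * ((θ k - π : ℝ):ℂ) * Complex.exp ((-2*Complex.I) * ((θ k - π : ℝ):ℂ))
        = ∑ k ∈ Finset.Icc 1 (M-1),
        (-1:ℂ)^k * ((θ k - π : ℝ):ℂ) * Complex.exp (-2*Complex.I*(θ k:ℂ)) := by
      refine Finset.sum_congr rfl fun k _ => ?_
      rw [show (-2*Complex.I) * ((θ k - π : ℝ):ℂ) = -2*Complex.I*(θ k:ℂ) + 2*π*Complex.I by
        push_cast; ring, Complex.exp_add, Complex.exp_two_pi_mul_I, mul_one]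
    unfold Gfun
    rw [e1, e2, e3]
    ring
  rw [hval]
  exact tendsto_factor1.mul (tendsto_Ffun M θ)

end
end

section
/- Let M ≥ 3 be an odd integer, a > 0 and Θ = (θ_1,…,θ_{M-1}) ∈ ℝ^{M-1}. Then cosh(πA) · 𝒦(a,Θ) + Σ_{l=1}^{M-1} 𝓗_l(a,Θ) e^{A(θ_l - π)} = cosh(πA) sinh(πA). -/
open Complex Real Finset

noncomputable section

/-- `𝓗_l(a,Θ)`, for angles `θ : ℕ → ℝ` (with `θ 0 = 0` understood). -/
def HfunN (M : ℕ) (θ : ℕ → ℝ) (l : ℕ) (a : ℝ) : ℂ :=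
  (Complex.exp ((π : ℂ) * Afun a) - (-1 : ℂ) ^ M * Complex.exp (-((π : ℂ) * Afun a))) / 2 +
    (∑ k ∈ Finset.range l,
      (-1 : ℂ) ^ (l + k) * Complex.exp (Afun a * ((θ k - θ l + π : ℝ) : ℂ))) +
    (-1 : ℂ) ^ M * ∑ k ∈ Finset.Icc l (M - 1),
      (-1 : ℂ) ^ (l + k) * Complex.exp (Afun a * ((θ k - θ l - π : ℝ) : ℂ))

/-- Alternating sum over `Icc 1 n`. -/
lemma lemC (n : ℕ) : ∑ l ∈ Finset.Icc 1 n, (-1 : ℂ) ^ l = ((-1) ^ n - 1) / 2 := by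
  induction n with
  | zero => simp
  | succ m ih =>
    rw [Finset.sum_Icc_succ_top (by omega), ih]
    ring

lemma lemA (x : ℕ → ℂ) (n : ℕ) :
    ∑ l ∈ Finset.Icc 1 n, ∑ k ∈ Finset.range l, (-1 : ℂ) ^ (l + k) * x k
      = ∑ k ∈ Finset.range n, (((-1 : ℂ) ^ (n + k) - 1) / 2) * x k := by
  induction n with
  | zero => simp
  | succ m ih =>
    rw [Finset.sum_Icc_succ_top (by omega), ih, Finset.sum_range_succ, Finset.sum_range_succ]
    have hmerge : (∑ k ∈ Finset.range m, (((-1 : ℂ) ^ (m + k) - 1) / 2) * x k)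
        + ∑ k ∈ Finset.range m, (-1 : ℂ) ^ (m + 1 + k) * x k
        = ∑ k ∈ Finset.range m, (((-1 : ℂ) ^ (m + 1 + k) - 1) / 2) * x k := by
      rw [← Finset.sum_add_distrib]
      refine Finset.sum_congr rfl fun k _ => ?_
      rw [pow_add, pow_add, pow_add]
      ring
    have hsq : ((-1 : ℂ) ^ m) * ((-1 : ℂ) ^ m) = 1 := by
      rw [← pow_add, ← two_mul, pow_mul]; norm_num
    linear_combination hmerge - (x m / 2) * hsq
  
lemma lemB (x : ℕ → ℂ) (n : ℕ) :
    ∑ l ∈ Finset.Icc 1 n, ∑ k ∈ Finset.Icc l n, (-1 : ℂ) ^ (l + k) * x k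
      = ∑ k ∈ Finset.Icc 1 n, ((1 - (-1 : ℂ) ^ k) / 2) * x k := by
  induction n with
  | zero => simp
  | succ m ih =>
    rw [Finset.sum_Icc_succ_top (show 1 ≤ m + 1 by omega)]
    have hsplit : ∀ l ∈ Finset.Icc 1 m,
        (∑ k ∈ Finset.Icc l (m + 1), (-1 : ℂ) ^ (l + k) * x k)
          = (∑ k ∈ Finset.Icc l m, (-1 : ℂ) ^ (l + k) * x k)
            + (-1 : ℂ) ^ (l + (m + 1)) * x (m + 1) := by
      intro l hl
      simp only [Finset.mem_Icc] at hl
      exact Finset.sum_Icc_succ_top (by omega) _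
    rw [Finset.sum_congr rfl hsplit, Finset.sum_add_distrib, ih,
      Finset.sum_Icc_succ_top (show 1 ≤ m + 1 by omega)]
    have hmid : (∑ l ∈ Finset.Icc 1 m, (-1 : ℂ) ^ (l + (m + 1)) * x (m + 1))
        = (((-1 : ℂ) ^ m - 1) / 2) * ((-1 : ℂ) ^ (m + 1) * x (m + 1)) := by
      rw [← lemC m, Finset.sum_mul]
      refine Finset.sum_congr rfl fun l _ => ?_
      rw [pow_add]; ring
    rw [hmid, Finset.Icc_self, Finset.sum_singleton]
    have hsq : ((-1 : ℂ) ^ m) * ((-1 : ℂ) ^ m) = 1 := by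
      rw [← pow_add, ← two_mul, pow_mul]; norm_num
    linear_combination (x (m + 1) / 2) * hsq

theorem cosh_K_add_sum_H (M : ℕ) (hM : 3 ≤ M) (hModd : Odd M) (a : ℝ) (ha : 0 < a)
    (Θ : Fin (M - 1) → ℝ) :
    Complex.cosh ((π : ℂ) * Afun a) * KfunN M (thN M Θ) a +
        ∑ l ∈ Finset.Icc 1 (M - 1),
          HfunN M (thN M Θ) l a * Complex.exp (Afun a * ((thN M Θ l - π : ℝ) : ℂ)) =
      Complex.cosh ((π : ℂ) * Afun a) * Complex.sinh ((π : ℂ) * Afun a) := by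
  have hM1 : (-1 : ℂ) ^ M = -1 := Odd.neg_one_pow hModd
  simp only [KfunN, HfunN, hM1]
  set A := Afun a with hAdef
  set θ := thN M Θ with hθdef
  set n := M - 1 with hndef
  have hn2 : 2 ≤ n := by omega
  have hneven : Even n := by
    rcases hModd with ⟨t, ht⟩
    exact ⟨t, by omega⟩
  have hneg1n : (-1 : ℂ) ^ n = 1 := Even.neg_one_pow hneven
  set E := Complex.exp ((π : ℂ) * A) with hEdef
  have hE0 : E ≠ 0 := Complex.exp_ne_zero _
  have hEe : E * E⁻¹ = 1 := mul_inv_cancel₀ hE0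
  set x : ℕ → ℂ := fun k => Complex.exp (A * (θ k : ℂ)) with hxdef
  have hx : ∀ k, x k ≠ 0 := fun k => Complex.exp_ne_zero _
  have hexpneg : Complex.exp (-((π : ℂ) * A)) = E⁻¹ := by
    rw [Complex.exp_neg]
  have h1 : ∀ k, Complex.exp (A * ((θ k - π : ℝ) : ℂ)) = x k * E⁻¹ := by
    intro k
    push_cast
    rw [show A * ((θ k : ℂ) - (π : ℂ)) = A * (θ k : ℂ) + -((π : ℂ) * A) by ring,
      Complex.exp_add, Complex.exp_neg]
  have h2 : ∀ k l, Complex.exp (A * ((θ k - θ l + π : ℝ) : ℂ)) = x k * (x l)⁻¹ * E := by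
    intro k l
    push_cast
    rw [show A * ((θ k : ℂ) - (θ l : ℂ) + (π : ℂ))
        = A * (θ k : ℂ) + (-(A * (θ l : ℂ)) + (π : ℂ) * A) by ring,
      Complex.exp_add, Complex.exp_add, Complex.exp_neg]
    ring
  have h3 : ∀ k l, Complex.exp (A * ((θ k - θ l - π : ℝ) : ℂ)) = x k * (x l)⁻¹ * E⁻¹ := by
    intro k l
    push_cast
    rw [show A * ((θ k : ℂ) - (θ l : ℂ) - (π : ℂ))
        = A * (θ k : ℂ) + (-(A * (θ l : ℂ)) + -((π : ℂ) * A)) by ring,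
      Complex.exp_add, Complex.exp_add, Complex.exp_neg, Complex.exp_neg]
    ring
  set S1 := ∑ k ∈ Finset.Icc 1 n, (-1 : ℂ) ^ k * x k with hS1def
  set S0 := ∑ k ∈ Finset.Icc 1 n, x k with hS0def
  set D := ∑ k ∈ Finset.Icc 1 n, ((1 - (-1 : ℂ) ^ k) / 2) * x k with hDdef
  set C := (E + E⁻¹) / 2 with hCdef
  have hcosh : Complex.cosh ((π : ℂ) * A) = C := by
    have := Complex.two_cosh ((π : ℂ) * A)
    rw [hexpneg] at this
    rw [hCdef]
    linear_combination this / 2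
  have hsinh : Complex.sinh ((π : ℂ) * A) = (E - E⁻¹) / 2 := by
    have := Complex.two_sinh ((π : ℂ) * A)
    rw [hexpneg] at this
    linear_combination this / 2
  rw [hcosh, hsinh, hexpneg]
  -- K part
  have hKsum : (∑ k ∈ Finset.Icc 1 n, (-1 : ℂ) ^ k * Complex.exp (A * ((θ k - π : ℝ) : ℂ)))
      = E⁻¹ * S1 := by
    rw [hS1def, Finset.mul_sum]
    exact Finset.sum_congr rfl fun k _ => by rw [h1 k]; ring
  rw [hKsum]
  -- H part
  have hH : ∀ l ∈ Finset.Icc 1 n,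
      ((E - -1 * E⁻¹) / 2 +
        (∑ k ∈ Finset.range l, (-1 : ℂ) ^ (l + k) * Complex.exp (A * ((θ k - θ l + π : ℝ) : ℂ))) +
        -1 * ∑ k ∈ Finset.Icc l n, (-1 : ℂ) ^ (l + k) * Complex.exp (A * ((θ k - θ l - π : ℝ) : ℂ)))
        * Complex.exp (A * ((θ l - π : ℝ) : ℂ))
      = C * (x l * E⁻¹) + (∑ k ∈ Finset.range l, (-1 : ℂ) ^ (l + k) * x k)
        - E⁻¹ * E⁻¹ * ∑ k ∈ Finset.Icc l n, (-1 : ℂ) ^ (l + k) * x k := by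
    intro l _
    rw [h1 l]
    have e2 : (∑ k ∈ Finset.range l, (-1 : ℂ) ^ (l + k)
        * Complex.exp (A * ((θ k - θ l + π : ℝ) : ℂ)))
        = (∑ k ∈ Finset.range l, (-1 : ℂ) ^ (l + k) * x k) * ((x l)⁻¹ * E) := by
      rw [Finset.sum_mul]
      exact Finset.sum_congr rfl fun k _ => by rw [h2 k l]; ring
    have e3 : (∑ k ∈ Finset.Icc l n, (-1 : ℂ) ^ (l + k)
        * Complex.exp (A * ((θ k - θ l - π : ℝ) : ℂ)))
        = (∑ k ∈ Finset.Icc l n, (-1 : ℂ) ^ (l + k) * x k) * ((x l)⁻¹ * E⁻¹) := by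
      rw [Finset.sum_mul]
      exact Finset.sum_congr rfl fun k _ => by rw [h3 k l]; ring
    rw [e2, e3, hCdef]
    have hxl : (x l)⁻¹ * x l = 1 := inv_mul_cancel₀ (hx l)
    set P := ∑ k ∈ Finset.range l, (-1 : ℂ) ^ (l + k) * x k with hP
    set Q := ∑ k ∈ Finset.Icc l n, (-1 : ℂ) ^ (l + k) * x k with hQ
    linear_combination (P * (x l)⁻¹ * x l) * hEe + (P - Q * E⁻¹ * E⁻¹) * hxl
  rw [Finset.sum_congr rfl hH]
  have hsplit : (∑ l ∈ Finset.Icc 1 n,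
      (C * (x l * E⁻¹) + (∑ k ∈ Finset.range l, (-1 : ℂ) ^ (l + k) * x k)
        - E⁻¹ * E⁻¹ * ∑ k ∈ Finset.Icc l n, (-1 : ℂ) ^ (l + k) * x k))
      = C * E⁻¹ * S0 + (∑ l ∈ Finset.Icc 1 n, ∑ k ∈ Finset.range l, (-1 : ℂ) ^ (l + k) * x k)
        - E⁻¹ * E⁻¹ * ∑ l ∈ Finset.Icc 1 n, ∑ k ∈ Finset.Icc l n, (-1 : ℂ) ^ (l + k) * x k := by
    have hA1 : (∑ l ∈ Finset.Icc 1 n, C * (x l * E⁻¹)) = C * E⁻¹ * S0 := by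
      rw [hS0def, Finset.mul_sum]
      exact Finset.sum_congr rfl fun l _ => by ring
    rw [Finset.sum_sub_distrib, Finset.sum_add_distrib, hA1, ← Finset.mul_sum]
  rw [hsplit, lemA, lemB]
  -- convert range-sum to D and combine
  have hTA : (∑ k ∈ Finset.range n, (((-1 : ℂ) ^ (n + k) - 1) / 2) * x k) = -D := by
    have step1 : (∑ k ∈ Finset.range n, (((-1 : ℂ) ^ (n + k) - 1) / 2) * x k)
        = ∑ k ∈ Finset.range n, -(((1 - (-1 : ℂ) ^ k) / 2) * x k) := by
      refine Finset.sum_congr rfl fun k _ => ?_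
      rw [pow_add, hneg1n]; ring
    rw [step1, Finset.sum_neg_distrib, neg_inj, hDdef]
    rw [Finset.range_eq_Ico, Finset.sum_eq_sum_Ico_succ_bot (by omega : 0 < n)]
    rw [← Finset.Ico_add_one_right_eq_Icc 1 n, Finset.sum_Ico_succ_top (by omega : 1 ≤ n)]
    have c0 : ((1 - (-1 : ℂ) ^ 0) / 2) * x 0 = 0 := by norm_num
    have cn : ((1 - (-1 : ℂ) ^ n) / 2) * x n = 0 := by rw [hneg1n]; ring
    rw [c0, cn]
    ring
  rw [hTA]
  -- final linear algebra
  have hS : S0 - S1 = 2 * D := by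
    rw [hS0def, hS1def, hDdef, ← Finset.sum_sub_distrib, Finset.mul_sum]
    exact Finset.sum_congr rfl fun k _ => by ring
  rw [hCdef]
  linear_combination ((E + E⁻¹) / 2 * E⁻¹) * hS + D * hEe

end
end
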